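/- Assume the covering setup, fix an index i, and let x̃₀ ∈ Coin(q,fᵢ). (1) For every z̃ ∈ q⁻¹(q(x̃₀)) ∩ Coin(q,fᵢ), there is a bijection between K_i(x̃₀) and K_i(z̃). (2) For every z̃ ∈ Coin(q,fᵢ) that is Nielsen coincidence equivalent to x̃₀ for (q,fᵢ), there is a bijection between K_i(x̃₀) and K_i(z̃). -/

import Mathlib

/-- Two coincidence points `y₁, y₂` of the pair `(q, f)` are Nielsen coincidence
equivalent if there is a path `γ` from `y₁` to `y₂` such that `q ∘ γ` and `f ∘ γ` are
homotopic relative to their endpoints. -/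
def CoinEquiv {Xh X : Type*} [TopologicalSpace Xh] [TopologicalSpace X]
    (q f : Xh → X) (hq : Continuous q) (hf : Continuous f)
    (y₁ y₂ : Xh) (h₁ : q y₁ = f y₁) (h₂ : q y₂ = f y₂) : Prop :=
  ∃ γ : Path y₁ y₂, (γ.map hq).Homotopic ((γ.map hf).cast h₁ h₂)

/-- Two points `x, x'` of `X` are Nielsen fixed-point equivalent if there are a path `γ`
in `X̂` and an index `j` such that `q ∘ γ` and `fⱼ ∘ γ` are both paths from `x` to `x'`
and are homotopic relative to their endpoints. -/
def NielsenFixRel {Xh X : Type*} [TopologicalSpace Xh] [TopologicalSpace X]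
    (q : Xh → X) (hq : Continuous q) {n : ℕ}
    (f : Fin n → Xh → X) (hf : ∀ i, Continuous (f i)) (x x' : X) : Prop :=
  ∃ (y y' : Xh) (γ : Path y y') (j : Fin n)
    (h1 : q y = x) (h2 : q y' = x') (h3 : f j y = x) (h4 : f j y' = x'),
    ((γ.map hq).cast h1.symm h2.symm).Homotopic ((γ.map (hf j)).cast h3.symm h4.symm)

/-- `K_i(x̃)`: the set of points of the fibre `q⁻¹(q x̃)` that are coincidence points of
`(q, f)` and are Nielsen coincidence equivalent to `x̃`. -/
def Kset {Xh X : Type*} [TopologicalSpace Xh] [TopologicalSpace X]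
    (q f : Xh → X) (hq : Continuous q) (hf : Continuous f)
    (xt : Xh) (hx : q xt = f xt) : Set Xh :=
  {y : Xh | ∃ hy : q y = f y, q y = q xt ∧ CoinEquiv q f hq hf xt y hx hy}


section Aux

variable {Xh X : Type*} [TopologicalSpace Xh] [TopologicalSpace X]

lemma path_cast_rfl {x y : X} (p : Path x y) : p.cast rfl rfl = p := by
  ext t; rfl

lemma homotopic_cast {x y x' y' : X} (hx : x' = x) (hy : y' = y) {p p' : Path x y}
    (h : p.Homotopic p') : (p.cast hx hy).Homotopic (p'.cast hx hy) := by
  subst hx; subst hy; rwa [path_cast_rfl, path_cast_rfl]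

lemma homotopic_symm2 {x y : X} {p p' : Path x y} (h : p.Homotopic p') :
    p.symm.Homotopic p'.symm := by
  obtain ⟨F⟩ := h; exact ⟨F.symm₂⟩

lemma CoinEquiv.symm' {q f : Xh → X} {hq : Continuous q} {hf : Continuous f}
    {a b : Xh} {ha : q a = f a} {hb : q b = f b}
    (h : CoinEquiv q f hq hf a b ha hb) : CoinEquiv q f hq hf b a hb ha := by
  obtain ⟨γ, H⟩ := h
  refine ⟨γ.symm, ?_⟩
  rw [← Path.map_symm, ← Path.map_symm, Path.cast_symm]
  exact homotopic_symm2 H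

lemma CoinEquiv.trans' {q f : Xh → X} {hq : Continuous q} {hf : Continuous f}
    {a b c : Xh} {ha : q a = f a} {hb : q b = f b} {hc : q c = f c}
    (h1 : CoinEquiv q f hq hf a b ha hb) (h2 : CoinEquiv q f hq hf b c hb hc) :
    CoinEquiv q f hq hf a c ha hc := by
  obtain ⟨γ, H1⟩ := h1
  obtain ⟨δ, H2⟩ := h2
  refine ⟨γ.trans δ, ?_⟩
  rw [Path.map_trans, Path.map_trans, Path.cast_trans (γ.map hf) (δ.map hf) ha hb hc]
  exact H1.hcomp H2

lemma coinEquiv_comp {q f : Xh → X} {hq : Continuous q} {hf : Continuous f}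
    (φ : Xh → Xh) (hφ : Continuous φ) (hqφ : ∀ y, q (φ y) = q y) (hfφ : ∀ y, f (φ y) = f y)
    {a b : Xh} {ha : q a = f a} {hb : q b = f b}
    (ha' : q (φ a) = f (φ a)) (hb' : q (φ b) = f (φ b))
    (h : CoinEquiv q f hq hf a b ha hb) :
    CoinEquiv q f hq hf (φ a) (φ b) ha' hb' := by
  obtain ⟨γ, H⟩ := h
  refine ⟨γ.map hφ, ?_⟩
  have e1 : q (φ a) = q a := hqφ a
  have e2 : q (φ b) = q b := hqφ b
  have eq1 : (γ.map hφ).map hq = (γ.map hq).cast e1 e2 := by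
    ext t; simp [hqφ]
  have eq2 : ((γ.map hφ).map hf).cast ha' hb' = ((γ.map hf).cast ha hb).cast e1 e2 := by
    ext t; simp [hfφ]
  rw [eq1, eq2]
  exact homotopic_cast e1 e2 H

lemma Kset_congr {q f : Xh → X} {hq : Continuous q} {hf : Continuous f}
    {a a' : Xh} (h : a = a') (ha : q a = f a) (ha' : q a' = f a') :
    Kset q f hq hf a ha = Kset q f hq hf a' ha' := by subst h; rfl

end Aux

/-- In the covering setup, for `x̃₀ ∈ Coin(q, fᵢ)`: (1) for every `z̃` in
`q⁻¹(q x̃₀) ∩ Coin(q, fᵢ)` there is a bijection between `K_i(x̃₀)` and `K_i(z̃)`, and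
(2) for every `z̃ ∈ Coin(q, fᵢ)` Nielsen coincidence equivalent to `x̃₀` there is a
bijection between `K_i(x̃₀)` and `K_i(z̃)`. -/
theorem stmt18
    {Xh X : Type*} [TopologicalSpace Xh] [TopologicalSpace X]
    (q : Xh → X) (hq : IsCoveringMap q)
    {G : Type*} [Group G] [MulAction G Xh]
    (hGcont : ∀ g : G, Continuous fun y : Xh => g • y)
    (hGfib : ∀ (g : G) (y : Xh), q (g • y) = q y)
    (hGtrans : ∀ y y' : Xh, q y = q y' → ∃! g : G, g • y = y')
    (n : ℕ) (hn : 1 ≤ n) (Γ : G →* Equiv.Perm (Fin n))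
    (f : Fin n → Xh → X) (hfcont : ∀ i, Continuous (f i))
    (hfdisj : ∀ (i j : Fin n), i ≠ j → ∀ y : Xh, f i y ≠ f j y)
    (hfequiv : ∀ (g : G) (y : Xh) (i : Fin n), f (Γ g i) (g • y) = f i y)
    (i : Fin n) (x0 : Xh) (hx0 : q x0 = f i x0) :
    (∀ (z : Xh) (hz : q z = f i z), q z = q x0 →
      Nonempty ((Kset q (f i) (hq.continuous) (hfcont i) x0 hx0) ≃
        (Kset q (f i) (hq.continuous) (hfcont i) z hz))) ∧
    (∀ (z : Xh) (hz : q z = f i z),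
      CoinEquiv q (f i) (hq.continuous) (hfcont i) x0 z hx0 hz →
      Nonempty ((Kset q (f i) (hq.continuous) (hfcont i) x0 hx0) ≃
        (Kset q (f i) (hq.continuous) (hfcont i) z hz))) := by
  have lemA : ∀ (g : G) (a b : Xh), g • a = b → q a = f i a → q b = f i b → Γ g i = i := by
    intro g a b hab ha hb
    by_contra hne
    refine hfdisj i (Γ g i) (fun h => hne h.symm) b ?_
    calc f i b = q b := hb.symm
      _ = q (g • a) := by rw [hab]
      _ = q a := hGfib g a
      _ = f i a := ha
      _ = f (Γ g i) (g • a) := (hfequiv g a i).symm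
      _ = f (Γ g i) b := by rw [hab]
  have keylemma : ∀ (g : G) (a : Xh) (ha : q a = f i a) (ha' : q (g • a) = f i (g • a))
      (hΓ : Γ g i = i) (y : Xh),
      y ∈ Kset q (f i) hq.continuous (hfcont i) a ha →
      (g • y) ∈ Kset q (f i) hq.continuous (hfcont i) (g • a) ha' := by
    rintro g a ha ha' hΓ y ⟨hyc, hyq, hye⟩
    have hff : ∀ w, f i (g • w) = f i w := fun w => by
      have := hfequiv g w i; rwa [hΓ] at this
    have hgc : q (g • y) = f i (g • y) := (hGfib g y).trans (hyc.trans (hff y).symm)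
    refine ⟨hgc, ?_, ?_⟩
    · rw [hGfib, hGfib]; exact hyq
    · exact coinEquiv_comp (fun w => g • w) (hGcont g) (hGfib g) hff ha' hgc hye
  constructor
  · -- Part (1)
    intro z hz hzq
    obtain ⟨g, hg, -⟩ := hGtrans x0 z hzq.symm
    subst hg
    have hΓ : Γ g i = i := lemA g x0 (g • x0) rfl hx0 hz
    have hΓinv : Γ g⁻¹ i = i := by
      refine (Γ g).injective ?_
      rw [hΓ, ← Equiv.Perm.mul_apply, ← map_mul, mul_inv_cancel, map_one, Equiv.Perm.one_apply]
    have e : g⁻¹ • g • x0 = x0 := inv_smul_smul g x0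
    have hcinv : q (g⁻¹ • g • x0) = f i (g⁻¹ • g • x0) := by rw [e]; exact hx0
    refine ⟨⟨fun y => ⟨g • y.1, keylemma g x0 hx0 hz hΓ y.1 y.2⟩,
      fun w => ⟨g⁻¹ • w.1, ?_⟩, fun y => Subtype.ext (inv_smul_smul g y.1),
      fun w => Subtype.ext (smul_inv_smul g w.1)⟩⟩
    have hm := keylemma g⁻¹ (g • x0) hz hcinv hΓinv w.1 w.2
    rwa [Kset_congr e hcinv hx0] at hm
  · -- Part (2)
    intro z hz hcz
    set cq := hq.continuous
    classical
    let S : Set G := {g : G | ∃ h1 : q (g • x0) = f i (g • x0),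
      CoinEquiv q (f i) hq.continuous (hfcont i) x0 (g • x0) hx0 h1}
    have e1 : S ≃ (Kset q (f i) (hq.continuous) (hfcont i) x0 hx0) := by
      refine Equiv.ofBijective (fun g => ⟨g.1 • x0, ?_⟩) ⟨?_, ?_⟩
      · obtain ⟨h1, hc⟩ := g.2
        exact ⟨h1, hGfib g.1 x0, hc⟩
      · intro g g' h
        have h' : g.1 • x0 = g'.1 • x0 := congrArg Subtype.val h
        obtain ⟨u, hu, huniq⟩ := hGtrans x0 (g.1 • x0) (hGfib g.1 x0).symm
        exact Subtype.ext ((huniq g.1 rfl).trans (huniq g'.1 h'.symm).symm)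
      · rintro ⟨yv, hyc, hyq, hye⟩
        obtain ⟨u, hu, -⟩ := hGtrans x0 yv hyq.symm
        subst hu
        exact ⟨⟨u, hyc, hye⟩, rfl⟩
    have e2 : S ≃ (Kset q (f i) (hq.continuous) (hfcont i) z hz) := by
      refine Equiv.ofBijective (fun g => ⟨g.1 • z, ?_⟩) ⟨?_, ?_⟩
      · obtain ⟨h1, hc⟩ := g.2
        have hΓ : Γ g.1 i = i := lemA g.1 x0 (g.1 • x0) rfl hx0 h1
        have hff : ∀ w, f i (g.1 • w) = f i w := fun w => by
          have := hfequiv g.1 w i; rwa [hΓ] at this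
        have hzz : q (g.1 • z) = f i (g.1 • z) :=
          (hGfib g.1 z).trans (hz.trans (hff z).symm)
        refine ⟨hzz, hGfib g.1 z, ?_⟩
        exact CoinEquiv.trans' (CoinEquiv.symm' hcz) (CoinEquiv.trans' hc
          (coinEquiv_comp (fun w => g.1 • w) (hGcont g.1) (hGfib g.1) hff h1 hzz hcz))
      · intro g g' h
        have h' : g.1 • z = g'.1 • z := congrArg Subtype.val h
        obtain ⟨u, hu, huniq⟩ := hGtrans z (g.1 • z) (hGfib g.1 z).symm
        exact Subtype.ext ((huniq g.1 rfl).trans (huniq g'.1 h'.symm).symm)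
      · rintro ⟨wv, hwc, hwq, hwe⟩
        obtain ⟨u, hu, -⟩ := hGtrans z wv hwq.symm
        subst hu
        have hΓ : Γ u i = i := lemA u z (u • z) rfl hz hwc
        have hff : ∀ w, f i (u • w) = f i w := fun w => by
          have := hfequiv u w i; rwa [hΓ] at this
        have hxx : q (u • x0) = f i (u • x0) :=
          (hGfib u x0).trans (hx0.trans (hff x0).symm)
        refine ⟨⟨u, hxx, ?_⟩, rfl⟩
        exact CoinEquiv.trans' hcz (CoinEquiv.trans' hwe
          (coinEquiv_comp (fun w => u • w) (hGcont u) (hGfib u) hff hwc hxx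
            (CoinEquiv.symm' hcz)))
    exact ⟨e1.symm.trans e2⟩
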